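/- Let n ≥ 4, m ≥ 2, τ = m(n-2+m), and b = (-2τ - n + 4)/(2τ + (n-1)(n-4)). Then b(n-1)² + n - 1 + 2τ > 0, and the inequality -(bτ(n-1) + 3τ)²/(b(n-1)² + n - 1 + 2τ) + bτ² + τ(τ - n + 2) + 2τ ≥ 0 holds. -/

import Mathlib

/-- Key algebraic inequality for the Reilly-formula argument, case `n ≥ 4`, `m ≥ 2`:
with `τ = m(n-2+m)` and `b = (-2τ-n+4)/(2τ+(n-1)(n-4))`, one has
`b(n-1)² + n-1 + 2τ > 0` and
`-(bτ(n-1)+3τ)²/(b(n-1)²+n-1+2τ) + bτ² + τ(τ-n+2) + 2τ ≥ 0`. -/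
theorem stmt13 (n m : ℕ) (hn : 4 ≤ n) (hm : 2 ≤ m) (τ b : ℝ)
    (hτ : τ = (m : ℝ) * ((n : ℝ) - 2 + (m : ℝ)))
    (hb : b = (-2 * τ - (n : ℝ) + 4) / (2 * τ + ((n : ℝ) - 1) * ((n : ℝ) - 4))) :
    0 < b * ((n : ℝ) - 1) ^ 2 + (n : ℝ) - 1 + 2 * τ ∧
    0 ≤ -(b * τ * ((n : ℝ) - 1) + 3 * τ) ^ 2 /
          (b * ((n : ℝ) - 1) ^ 2 + (n : ℝ) - 1 + 2 * τ)
        + b * τ ^ 2 + τ * (τ - (n : ℝ) + 2) + 2 * τ := by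
  have hn4 : (4 : ℝ) ≤ (n : ℝ) := by exact_mod_cast hn
  have hm2 : (2 : ℝ) ≤ (m : ℝ) := by exact_mod_cast hm
  have hτ2n : 2 * (n : ℝ) ≤ τ := by nlinarith
  have hτpos : 0 < τ := by linarith
  have hDpos : 0 < 2 * τ + ((n : ℝ) - 1) * ((n : ℝ) - 4) := by nlinarith
  have hNum : 0 < 4 * τ * (τ - (n : ℝ) + 1) := by nlinarith
  have hE : b * ((n : ℝ) - 1) ^ 2 + (n : ℝ) - 1 + 2 * τ =
      4 * τ * (τ - (n : ℝ) + 1) / (2 * τ + ((n : ℝ) - 1) * ((n : ℝ) - 4)) := by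
    rw [hb]; field_simp; ring
  have hEpos : 0 < b * ((n : ℝ) - 1) ^ 2 + (n : ℝ) - 1 + 2 * τ := by
    rw [hE]; positivity
  refine ⟨hEpos, le_of_eq ?_⟩
  rw [hE, hb]
  rw [hb] at hE
  have hne : τ - (n : ℝ) + 1 ≠ 0 := by linarith
  field_simp at hE ⊢
  nlinarith [hE, sq_nonneg τ, sq_nonneg ((n:ℝ)-1)]
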